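/- Let R be a commutative ring, I, J ⊆ R ideals, with J = (f) principal generated by a nonzerodivisor f of R. Then the natural map I ⊗_R (R/J) → R/J is injective if and only if multiplication by f on R/I is injective. -/

import Mathlib

open TensorProduct

/-- Auxiliary map `I ⊗ R/J → R/(J*I)`, `i ⊗ [r] ↦ [r*i]`. -/
noncomputable def stmt9Aux (R : Type*) [CommRing R] (I J : Ideal R) :
    I ⊗[R] (R ⧸ J) →ₗ[R] R ⧸ (J * I : Ideal R) :=
  TensorProduct.lift
    ((Submodule.liftQ J
      (((LinearMap.mul R R).compl₂ I.subtype).compr₂ (J * I : Ideal R).mkQ)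
      (by
        intro r hr
        apply LinearMap.ext
        intro i
        simp only [LinearMap.compr₂_apply, LinearMap.compl₂_apply, LinearMap.mul_apply',
          Submodule.coe_subtype, LinearMap.zero_apply, Submodule.mkQ_apply,
          Submodule.Quotient.mk_eq_zero]
        exact Ideal.mul_mem_mul hr i.2)).flip)

lemma stmt9Aux_apply (R : Type*) [CommRing R] (I J : Ideal R) (i : I) (r : R) :
    stmt9Aux R I J (i ⊗ₜ Submodule.Quotient.mk r) =
      Submodule.Quotient.mk (r * (i : R)) := by
  simp only [stmt9Aux, TensorProduct.lift.tmul, LinearMap.flip_apply, Submodule.liftQ_apply,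
    LinearMap.compr₂_apply, LinearMap.compl₂_apply, LinearMap.mul_apply',
    Submodule.coe_subtype, Submodule.mkQ_apply]
  rfl

/-- For ideals `I, J ⊆ R` with `J = (f)` generated by a nonzerodivisor `f`,
the natural map `I ⊗_R (R/J) → R/J` (induced by the inclusion `I ⊆ R` and the module
action) is injective iff multiplication by `f` on `R/I` is injective. -/
theorem stmt9 (R : Type*) [CommRing R] (I J : Ideal R) (f : R)
    (hf : f ∈ nonZeroDivisors R) (hJ : J = Ideal.span {f}) :
    Function.Injective
      (TensorProduct.lift ((LinearMap.lsmul R (R ⧸ J)).comp I.subtype) :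
        I ⊗[R] (R ⧸ J) →ₗ[R] R ⧸ J) ↔
      Function.Injective (fun x : R ⧸ I => f • x) := by
  subst hJ
  set φ : I ⊗[R] (R ⧸ Ideal.span {f}) →ₗ[R] R ⧸ Ideal.span {f} :=
    TensorProduct.lift ((LinearMap.lsmul R (R ⧸ Ideal.span {f})).comp I.subtype) with hφ
  have hφ_tmul : ∀ (i : I) (r : R),
      φ (i ⊗ₜ Submodule.Quotient.mk r) = Submodule.Quotient.mk ((i : R) * r) := by
    intro i r
    simp only [hφ, TensorProduct.lift.tmul, LinearMap.comp_apply, Submodule.coe_subtype,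
      LinearMap.lsmul_apply]
    rw [← Submodule.Quotient.mk_smul, smul_eq_mul]
  constructor
  · intro hinj
    have key : ∀ c : R, f * c ∈ I → c ∈ I := by
      intro c hc
      set z : I ⊗[R] (R ⧸ Ideal.span {f}) :=
        (⟨f * c, hc⟩ : I) ⊗ₜ Submodule.Quotient.mk 1 with hz
      have hz0 : φ z = 0 := by
        rw [hz, hφ_tmul]
        rw [Submodule.Quotient.mk_eq_zero]
        exact Ideal.mem_span_singleton.mpr ⟨c, by ring⟩
      have hzz : z = 0 := hinj (by rw [hz0, map_zero])
      have : stmt9Aux R I (Ideal.span {f}) z = 0 := by rw [hzz, map_zero]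
      rw [hz, stmt9Aux_apply, Submodule.Quotient.mk_eq_zero, one_mul] at this
      obtain ⟨y, hyI, hy⟩ := Ideal.mem_span_singleton_mul.mp this
      have : y = c := (mul_cancel_left_mem_nonZeroDivisors hf).mp (by rw [hy])
      exact this ▸ hyI
    intro a b hab
    obtain ⟨x, rfl⟩ := Submodule.Quotient.mk_surjective I a
    obtain ⟨y, rfl⟩ := Submodule.Quotient.mk_surjective I b
    simp only at hab
    rw [← Submodule.Quotient.mk_smul, ← Submodule.Quotient.mk_smul,
      Submodule.Quotient.eq] at hab
    rw [Submodule.Quotient.eq]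
    have : f * (x - y) ∈ I := by
      have : f • x - f • y = f * (x - y) := by simp [smul_eq_mul]; ring
      rwa [this] at hab
    exact key _ this
  · intro hm
    have key : ∀ c : R, f * c ∈ I → c ∈ I := by
      intro c hc
      have h1 : f • (Submodule.Quotient.mk c : R ⧸ I) = f • (0 : R ⧸ I) := by
        rw [smul_zero, ← Submodule.Quotient.mk_smul, smul_eq_mul,
          Submodule.Quotient.mk_eq_zero]
        exact hc
      have := hm h1
      rwa [Submodule.Quotient.mk_eq_zero] at this
    have repr : ∀ z : I ⊗[R] (R ⧸ Ideal.span {f}),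
        ∃ i : I, z = i ⊗ₜ Submodule.Quotient.mk 1 := by
      intro z
      induction z using TensorProduct.induction_on with
      | zero => exact ⟨0, by simp⟩
      | tmul i q =>
        obtain ⟨r, rfl⟩ := Submodule.Quotient.mk_surjective _ q
        refine ⟨r • i, ?_⟩
        rw [smul_tmul]
        congr 1
        rw [← Submodule.Quotient.mk_smul, smul_eq_mul, mul_one]
      | add x y hx hy =>
        obtain ⟨i, rfl⟩ := hx
        obtain ⟨j, rfl⟩ := hy
        exact ⟨i + j, (TensorProduct.add_tmul i j _).symm⟩
    have ker0 : ∀ z, φ z = 0 → z = 0 := by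
      intro z hz
      obtain ⟨i, rfl⟩ := repr z
      rw [hφ_tmul, mul_one, Submodule.Quotient.mk_eq_zero] at hz
      obtain ⟨r, hr⟩ := Ideal.mem_span_singleton'.mp hz
      have hrI : r ∈ I := key r (by rw [mul_comm]; exact hr ▸ i.2)
      have hieq : i = f • (⟨r, hrI⟩ : I) := by
        apply Subtype.ext
        simp [smul_eq_mul, ← hr]
        ring
      rw [hieq, smul_tmul, ← Submodule.Quotient.mk_smul, smul_eq_mul, mul_one]
      have : (Submodule.Quotient.mk f : R ⧸ Ideal.span {f}) = 0 := by
        rw [Submodule.Quotient.mk_eq_zero]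
        exact Ideal.mem_span_singleton_self f
      rw [this, TensorProduct.tmul_zero]
    intro a b hab
    have := ker0 (a - b) (by rw [map_sub, hab, sub_self])
    exact sub_eq_zero.mp this
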